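/- Let n be a positive integer and let U : [0,1] → ℝ be concave with U(0) ≥ 0 and ((1 − (1−q)^n)/q)·U(q) ≤ 1 for all q ∈ (0,1]. Then U(1) + ∫_0^1 ((1 − (1−t)^n − n·t·(1−t)^{n−1})/t²)·U(t) dt ≤ H_n + 1, where H_n = ∑_{j=1}^n 1/j is the n-th harmonic number. -/

import Mathlib

open Real intervalIntegral Finset

lemma key_id (n : ℕ) (t : ℝ) :
    1 - (1 - t) ^ n - n * t * (1 - t) ^ (n - 1)
      = t ^ 2 * ∑ k ∈ Finset.range n, (k : ℝ) * (1 - t) ^ (k - 1) := by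
  induction n with
  | zero => simp
  | succ m ih =>
    match m, ih with
    | 0, _ => simp
    | m + 1, ih =>
      rw [Finset.sum_range_succ]
      simp only [Nat.add_sub_cancel] at *
      push_cast at *
      linear_combination ih

theorem stmt_18 (n : ℕ) (hn : 0 < n) (U : ℝ → ℝ)
    (hconc : ConcaveOn ℝ (Set.Icc (0:ℝ) 1) U)
    (h0 : 0 ≤ U 0)
    (hfeas : ∀ q ∈ Set.Ioc (0:ℝ) 1, ((1 - (1 - q) ^ n) / q) * U q ≤ 1) :
    U 1 + (∫ t in (0:ℝ)..1,
        ((1 - (1 - t) ^ n - n * t * (1 - t) ^ (n - 1)) / t ^ 2) * U t)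
      ≤ (∑ j ∈ Finset.range n, (1 : ℝ) / (j + 1)) + 1 := by
  set φ : ℝ → ℝ := fun t => ∑ k ∈ Finset.range n, (1 - t) ^ k with hφ
  set N : ℝ → ℝ := fun t => ∑ k ∈ Finset.range n, (k : ℝ) * (1 - t) ^ (k - 1) with hN
  have hφpos : ∀ t ∈ Set.Icc (0:ℝ) 1, 0 < φ t := by
    intro t ht
    apply Finset.sum_pos' (fun k _ => pow_nonneg (by linarith [ht.2]) k)
    exact ⟨0, Finset.mem_range.2 hn, by simp⟩
  have hNnonneg : ∀ t ∈ Set.Icc (0:ℝ) 1, 0 ≤ N t := by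
    intro t ht
    exact Finset.sum_nonneg fun k _ =>
      mul_nonneg (Nat.cast_nonneg k) (pow_nonneg (by linarith [ht.2]) _)
  have hgeom : ∀ t : ℝ, t * φ t = 1 - (1 - t) ^ n := by
    intro t
    have := geom_sum_mul (1 - t) n
    linear_combination -this
  -- U 1 ≤ 1
  have hU1 : U 1 ≤ 1 := by
    have := hfeas 1 ⟨one_pos, le_refl 1⟩
    simpa [zero_pow hn.ne'] using this
  -- H_n ≥ log n
  have hH : Real.log n ≤ ∑ j ∈ Finset.range n, (1 : ℝ) / (j + 1) := by
    have h1 : Real.log n ≤ Real.log (n + 1) := by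
      apply Real.log_le_log (by exact_mod_cast hn) (by linarith)
    have h2 := log_add_one_le_harmonic n
    have h3 : ((harmonic n : ℚ) : ℝ) = ∑ j ∈ Finset.range n, (1 : ℝ) / (j + 1) := by
      simp [harmonic, one_div]
    rw [h3] at h2
    calc Real.log n ≤ Real.log (n + 1) := h1
      _ = Real.log ((n : ℕ) + 1 : ℕ) := by push_cast; ring_nf
      _ ≤ _ := h2
  have hHnn : (0:ℝ) ≤ ∑ j ∈ Finset.range n, (1 : ℝ) / (j + 1) :=
    Finset.sum_nonneg fun j _ => by positivity
  by_cases hI : IntervalIntegrable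
      (fun t => ((1 - (1 - t) ^ n - n * t * (1 - t) ^ (n - 1)) / t ^ 2) * U t)
      MeasureTheory.volume 0 1
  · -- continuity of ψ = N / φ
    have hφcont : Continuous φ := by
      apply continuous_finset_sum; intro k _; fun_prop
    have hNcont : Continuous N := by
      apply continuous_finset_sum; intro k _; fun_prop
    have hψcont : ContinuousOn (fun t => N t / φ t) (Set.Icc (0:ℝ) 1) :=
      (hNcont.continuousOn).div (hφcont.continuousOn)
        (fun t ht => (hφpos t ht).ne')
    have hψint : IntervalIntegrable (fun t => N t / φ t) MeasureTheory.volume 0 1 := by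
      apply ContinuousOn.intervalIntegrable
      rwa [Set.uIcc_of_le (by norm_num)]
    -- pointwise bound
    have hpw : ∀ t ∈ Set.Icc (0:ℝ) 1,
        ((1 - (1 - t) ^ n - n * t * (1 - t) ^ (n - 1)) / t ^ 2) * U t ≤ N t / φ t := by
      intro t ht
      rcases eq_or_lt_of_le ht.1 with h'|h'
      · subst h'
        norm_num
        exact div_nonneg (hNnonneg 0 (by norm_num)) (hφpos 0 (by norm_num)).le
      · have hg : (1 - (1 - t) ^ n - n * t * (1 - t) ^ (n - 1)) / t ^ 2 = N t := by
          rw [key_id n t, mul_div_assoc]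
          field_simp
          rfl
        rw [hg]
        have hφt := hφpos t ht
        have hUt : U t ≤ 1 / φ t := by
          have hf := hfeas t ⟨h', ht.2⟩
          have : (1 - (1 - t) ^ n) / t = φ t := by
            field_simp [h'.ne']
            linarith [hgeom t]
          rw [this] at hf
          rw [le_div_iff₀ hφt]
          linarith [hf, mul_comm (φ t) (U t)]
        calc N t * U t ≤ N t * (1 / φ t) :=
              mul_le_mul_of_nonneg_left hUt (hNnonneg t ht)
          _ = N t / φ t := by rw [mul_one_div]
    have hmono := intervalIntegral.integral_mono_on (by norm_num : (0:ℝ) ≤ 1) hI hψint hpw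
    -- compute ∫ ψ = log n
    have hderiv : ∀ t ∈ Set.uIcc (0:ℝ) 1,
        HasDerivAt (fun t => -Real.log (φ t)) (N t / φ t) t := by
      intro t ht
      rw [Set.uIcc_of_le (by norm_num)] at ht
      have hφd : HasDerivAt φ (-(N t)) t := by
        have : HasDerivAt φ (∑ k ∈ Finset.range n, (k : ℝ) * (1 - t) ^ (k - 1) * (-1)) t := by
          apply HasDerivAt.fun_sum
          intro k _
          exact ((hasDerivAt_id t).const_sub 1).pow k
        convert this using 1
        rw [hN]
        simp [← Finset.sum_neg_distrib]
      have := (hφd.log (hφpos t ht).ne').fun_neg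
      rw [show N t / φ t = -(-N t / φ t) by ring]
      exact this
    have hcalc : (∫ t in (0:ℝ)..1, N t / φ t) = Real.log n := by
      rw [intervalIntegral.integral_eq_sub_of_hasDerivAt hderiv hψint]
      have h1 : φ 1 = 1 := by
        rw [hφ]; simp [zero_geom_sum, hn.ne']
      have h0' : φ 0 = n := by rw [hφ]; simp
      rw [h1, h0']
      simp
    rw [hcalc] at hmono
    linarith
  · rw [intervalIntegral.integral_undef hI]
    linarith
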